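/- Let S : [0,1] → ℝ be continuous with S(p) = S(1-p) for all p, and define λ(x) = inf_{p∈[0,1]}(p·x - T·S(p)) for fixed T > 0. Then λ(x) - λ(-x) = x for all real x. Conversely, if S is additionally strictly concave and λ(x) - λ(-x) = x for all x, then S(p) = S(1-p) for all p ∈ [0,1]. -/

import Mathlib

open Set

/-- The successor function `λ(x) = inf_{p ∈ [0,1]} (p·x - T·S(p))`. -/
noncomputable def lam (T : ℝ) (S : ℝ → ℝ) (x : ℝ) : ℝ :=
  ⨅ p : Set.Icc (0 : ℝ) 1, ((p : ℝ) * x - T * S p)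

lemma lam_bdd (T : ℝ) (S : ℝ → ℝ) (x : ℝ) (hcont : ContinuousOn S (Set.Icc 0 1)) :
    BddBelow (Set.range fun p : Set.Icc (0 : ℝ) 1 => (p : ℝ) * x - T * S p) := by
  have hc : Continuous fun p : Set.Icc (0 : ℝ) 1 => (p : ℝ) * x - T * S p := by
    exact (continuous_subtype_val.mul continuous_const).sub
      (continuous_const.mul hcont.restrict)
  exact (isCompact_range hc).bddBelow

lemma lam_le (T : ℝ) (S : ℝ → ℝ) (x : ℝ) (hcont : ContinuousOn S (Set.Icc 0 1))
    {p : ℝ} (hp : p ∈ Set.Icc (0 : ℝ) 1) : lam T S x ≤ p * x - T * S p :=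
  ciInf_le (lam_bdd T S x hcont) ⟨p, hp⟩

lemma le_lam (T : ℝ) (S : ℝ → ℝ) (x : ℝ) {c : ℝ}
    (h : ∀ p ∈ Set.Icc (0 : ℝ) 1, c ≤ p * x - T * S p) : c ≤ lam T S x :=
  le_ciInf fun p => h p p.2

lemma mem_flip {p : ℝ} (hp : p ∈ Set.Icc (0 : ℝ) 1) : 1 - p ∈ Set.Icc (0 : ℝ) 1 :=
  ⟨by linarith [hp.1, hp.2], by linarith [hp.1, hp.2]⟩

lemma cont_flip {S : ℝ → ℝ} (hcont : ContinuousOn S (Set.Icc 0 1)) :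
    ContinuousOn (fun p => S (1 - p)) (Set.Icc 0 1) :=
  hcont.comp (continuous_const.sub continuous_id).continuousOn fun p hp => mem_flip hp

/-- Key reindexing identity: `λ_S(-x) = λ_{S̃}(x) - x` where `S̃(p) = S(1-p)`. -/
lemma lam_neg (T : ℝ) (S : ℝ → ℝ) (x : ℝ) (hcont : ContinuousOn S (Set.Icc 0 1)) :
    lam T S (-x) = lam T (fun p => S (1 - p)) x - x := by
  have hcont' := cont_flip hcont
  apply le_antisymm
  · rw [le_sub_iff_add_le]
    apply le_lam
    intro p hp
    have h1 := lam_le T S (-x) hcont (mem_flip hp)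
    have : (1 - p) * (-x) - T * S (1 - p) = p * x - T * S (1 - p) - x := by ring
    linarith [this ▸ h1]
  · apply le_lam
    intro p hp
    have h1 := lam_le T (fun p => S (1 - p)) x hcont' (mem_flip hp)
    simp only [sub_sub_cancel] at h1
    have h2 : (1 - p) * x - T * S p = p * (-x) - T * S p + x := by ring
    linarith [h1, h2]

/-- Supporting line for a concave function at an interior point. -/
lemma supporting_line {f : ℝ → ℝ} (hf : ConcaveOn ℝ (Set.Icc 0 1) f) {p₀ : ℝ}
    (hp₀ : p₀ ∈ Set.Ioo (0 : ℝ) 1) :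
    ∃ x : ℝ, ∀ p ∈ Set.Icc (0 : ℝ) 1, f p - f p₀ ≤ x * (p - p₀) := by
  obtain ⟨h0, h1⟩ := hp₀
  set A : Set ℝ := (fun r => (f r - f p₀) / (r - p₀)) '' (Set.Ioc p₀ 1) with hA
  have hp₀I : p₀ ∈ Set.Icc (0 : ℝ) 1 := ⟨h0.le, h1.le⟩
  have hAne : A.Nonempty := ⟨_, ⟨1, ⟨h1, le_refl 1⟩, rfl⟩⟩
  -- every left slope is an upper bound of A
  have hub : ∀ l ∈ Set.Ico (0 : ℝ) p₀, ∀ a ∈ A, a ≤ (f p₀ - f l) / (p₀ - l) := by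
    rintro l ⟨hl0, hl⟩ a ⟨r, ⟨hr1, hr2⟩, rfl⟩
    exact hf.slope_anti_adjacent ⟨hl0, by linarith⟩ ⟨by linarith, hr2⟩ hl hr1
  have hbdd : BddAbove A := ⟨_, hub 0 ⟨le_refl 0, h0⟩⟩
  refine ⟨sSup A, fun p hp => ?_⟩
  rcases lt_trichotomy p p₀ with hlt | heq | hgt
  · have hx_le : sSup A ≤ (f p₀ - f p) / (p₀ - p) :=
      csSup_le hAne (hub p ⟨hp.1, hlt⟩)
    have hpos : (0:ℝ) < p₀ - p := by linarith
    rw [le_div_iff₀ hpos] at hx_le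
    nlinarith
  · simp [heq]
  · have hmem : (f p - f p₀) / (p - p₀) ∈ A := ⟨p, ⟨hgt, hp.2⟩, rfl⟩
    have hle := le_csSup hbdd hmem
    have hpos : (0:ℝ) < p - p₀ := by linarith
    rw [div_le_iff₀ hpos] at hle
    linarith

/-- Under strict concavity + the lambda identity, `S(1-p) ≤ S p` at interior points. -/
lemma interior_le (S : ℝ → ℝ) (T : ℝ) (hT : 0 < T)
    (hcont : ContinuousOn S (Set.Icc 0 1))
    (hconc : StrictConcaveOn ℝ (Set.Icc 0 1) S)
    (heq : ∀ x : ℝ, lam T S x = lam T (fun p => S (1 - p)) x)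
    {p₀ : ℝ} (hp₀ : p₀ ∈ Set.Ioo (0 : ℝ) 1) : S (1 - p₀) ≤ S p₀ := by
  have hfconc : ConcaveOn ℝ (Set.Icc 0 1) (fun p => T * S p) :=
    hconc.concaveOn.smul hT.le
  obtain ⟨x₀, hx₀⟩ := supporting_line hfconc hp₀
  have hp₀I : p₀ ∈ Set.Icc (0 : ℝ) 1 := ⟨hp₀.1.le, hp₀.2.le⟩
  -- λ_S(x₀) = p₀ x₀ - T S p₀
  have hlam : lam T S x₀ = p₀ * x₀ - T * S p₀ := by
    apply le_antisymm (lam_le T S x₀ hcont hp₀I)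
    apply le_lam
    intro p hp
    have := hx₀ p hp
    nlinarith
  have hle := lam_le T (fun p => S (1 - p)) x₀ (cont_flip hcont) hp₀I
  rw [← heq x₀, hlam] at hle
  nlinarith

theorem lam_commutativity_characterization (S : ℝ → ℝ) (T : ℝ) (hT : 0 < T)
    (hcont : ContinuousOn S (Set.Icc 0 1)) :
    ((∀ p ∈ Set.Icc (0 : ℝ) 1, S p = S (1 - p)) →
      ∀ x : ℝ, lam T S x - lam T S (-x) = x) ∧
    (StrictConcaveOn ℝ (Set.Icc 0 1) S →
      (∀ x : ℝ, lam T S x - lam T S (-x) = x) →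
      ∀ p ∈ Set.Icc (0 : ℝ) 1, S p = S (1 - p)) := by
  constructor
  · intro hsym x
    have h1 := lam_neg T S x hcont
    have h2 : lam T (fun p => S (1 - p)) x = lam T S x := by
      unfold lam
      congr 1
      funext p
      dsimp only
      rw [← hsym p p.2]
    rw [h1, h2]
    ring
  · intro hconc hid
    have heq : ∀ x : ℝ, lam T S x = lam T (fun p => S (1 - p)) x := by
      intro x
      have h1 := lam_neg T S x hcont
      have h2 := hid x
      linarith
    -- interior case
    have hint : ∀ p ∈ Set.Ioo (0 : ℝ) 1, S p = S (1 - p) := by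
      intro p hp
      have h1 := interior_le S T hT hcont hconc heq hp
      have hp' : 1 - p ∈ Set.Ioo (0 : ℝ) 1 := ⟨by linarith [hp.2], by linarith [hp.1]⟩
      have h2 := interior_le S T hT hcont hconc heq hp'
      rw [sub_sub_cancel] at h2
      linarith
    -- endpoints by continuity
    have hends : S 0 = S 1 := by
      have hseq : Filter.Tendsto (fun n : ℕ => (1 : ℝ) / (n + 2)) Filter.atTop (nhds 0) := by
        simp only [one_div]
        exact tendsto_inv_atTop_zero.comp
          (Filter.tendsto_atTop_add_const_right _ 2 tendsto_natCast_atTop_atTop)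
      have hmem : ∀ n : ℕ, (1 : ℝ) / (n + 2) ∈ Set.Ioo (0 : ℝ) 1 := by
        intro n
        constructor
        · positivity
        · rw [div_lt_one (by positivity)]
          have : (0:ℝ) ≤ (n:ℝ) := Nat.cast_nonneg n
          linarith
      have hseq' : Filter.Tendsto (fun n : ℕ => 1 - (1 : ℝ) / (n + 2)) Filter.atTop (nhds 1) := by
        have := Filter.Tendsto.const_sub (1:ℝ) hseq
        simpa using this
      have t0 : Filter.Tendsto (fun n : ℕ => S ((1 : ℝ) / (n + 2))) Filter.atTop (nhds (S 0)) := by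
        apply ((hcont 0 ⟨le_refl 0, zero_le_one⟩).tendsto).comp
        rw [tendsto_nhdsWithin_iff]
        exact ⟨hseq, Filter.Eventually.of_forall fun n =>
          ⟨(hmem n).1.le, (hmem n).2.le⟩⟩
      have t1 : Filter.Tendsto (fun n : ℕ => S (1 - (1 : ℝ) / (n + 2))) Filter.atTop
          (nhds (S 1)) := by
        apply ((hcont 1 ⟨zero_le_one, le_refl 1⟩).tendsto).comp
        rw [tendsto_nhdsWithin_iff]
        exact ⟨hseq', Filter.Eventually.of_forall fun n =>
          ⟨by linarith [(hmem n).2], by linarith [(hmem n).1]⟩⟩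
      have : ∀ n : ℕ, S ((1 : ℝ) / (n + 2)) = S (1 - (1 : ℝ) / (n + 2)) := fun n =>
        hint _ (hmem n)
      exact tendsto_nhds_unique (Filter.Tendsto.congr this t0) t1
    intro p hp
    rcases eq_or_lt_of_le hp.1 with h0 | h0
    · rw [← h0]; simpa using hends
    rcases eq_or_lt_of_le hp.2 with h1 | h1
    · rw [h1]; simpa using hends.symm
    exact hint p ⟨h0, h1⟩
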